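/- Let ν ∈ (0,1), let ι be a finite index set with |ι| ≥ 2, and let m : ι → ℝ. Let x₁ be an index maximizing m over ι and x₂ an index maximizing m over ι \ {x₁}. Define the terminal value V_L(m) = max_{x∈ι} exp(m[x]) / Σ_{l∈ι} exp(m[l]). Then max_{a∈ι} ∫₀^∞ V_L( m + J(y)·δ_a ) · f(y|m,a) dy = ( exp(m[x₁]) + h(ν)·exp( (m[x₂] − ν·m[x₁]) / (1−ν) ) ) / Σ_{l∈ι} exp(m[l]), and this maximum is attained at a = x₂. -/

import Mathlib

open Real MeasureTheory Finset

set_option linter.unusedSectionVars false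

noncomputable section

variable {ι : Type*} [Fintype ι] [DecidableEq ι]

/-- The log-likelihood update function `J(y) = (1-ν)y + ln ν`. -/
def Jfun (ν y : ℝ) : ℝ := (1 - ν) * y + Real.log ν

/-- `h(ν) = exp(ν ln ν/(1-ν)) - exp(ln ν/(1-ν))`. -/
def hfun (ν : ℝ) : ℝ :=
  Real.exp (ν * Real.log ν / (1 - ν)) - Real.exp (Real.log ν / (1 - ν))

/-- `g(ν) = exp(ln ν/(1-ν)) (1/(ν+1) - ln ν/(1-ν))`. -/
def gfun (ν : ℝ) : ℝ :=
  Real.exp (Real.log ν / (1 - ν)) * (1 / (ν + 1) - Real.log ν / (1 - ν))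

/-- Kronecker delta `δ[a,x]` as a real number. -/
def kdelta (a x : ι) : ℝ := if x = a then 1 else 0

theorem univ_nonempty_of_card (hcard : 2 ≤ Fintype.card ι) :
    (Finset.univ : Finset ι).Nonempty := by
  rw [← Finset.card_pos]
  have : (Finset.univ : Finset ι).card = Fintype.card ι := rfl
  omega

theorem erase_nonempty_of_card (hcard : 2 ≤ Fintype.card ι) (a : ι) :
    ((Finset.univ : Finset ι).erase a).Nonempty := by
  rw [← Finset.card_pos, Finset.card_erase_of_mem (Finset.mem_univ a)]
  have : (Finset.univ : Finset ι).card = Fintype.card ι := rfl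
  omega

theorem pairs_nonempty_of_card (hcard : 2 ≤ Fintype.card ι) :
    ((Finset.univ : Finset (ι × ι)).filter fun p => p.1 ≠ p.2).Nonempty := by
  obtain ⟨a, b, hab⟩ := Fintype.exists_pair_of_one_lt_card (α := ι) (by omega)
  exact ⟨(a, b), by simp [hab]⟩

/-- `max_{â ≠ a} m[â]`. -/
def maxOther (hcard : 2 ≤ Fintype.card ι) (m : ι → ℝ) (a : ι) : ℝ :=
  ((Finset.univ : Finset ι).erase a).sup' (erase_nonempty_of_card hcard a) m

/-- `ξ(a; m)`. -/
def xi (ν : ℝ) (hcard : 2 ≤ Fintype.card ι) (m : ι → ℝ) (a : ι) : ℝ :=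
  if maxOther hcard m a - m a < Real.log ν then Real.exp (m a)
  else Real.exp (maxOther hcard m a)
    + hfun ν * Real.exp ((m a - ν * maxOther hcard m a) / (1 - ν))

/-- `min_{x_i ≠ x_j} (m[x_i] - ν m[x_j])`, over ordered pairs of distinct indices. -/
def minPair (ν : ℝ) (hcard : 2 ≤ Fintype.card ι) (m : ι → ℝ) : ℝ :=
  (((Finset.univ : Finset (ι × ι)).filter fun p => p.1 ≠ p.2).inf'
    (pairs_nonempty_of_card hcard)) (fun p => m p.1 - ν * m p.2)

/-- The feedback density `f(y | m, a) = b[a] ν e^{-νy} + (1-b[a]) e^{-y}`. -/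
def fdens (ν : ℝ) (m : ι → ℝ) (a : ι) (y : ℝ) : ℝ :=
  (Real.exp (m a) / ∑ l, Real.exp (m l)) * (ν * Real.exp (-ν * y))
    + (1 - Real.exp (m a) / ∑ l, Real.exp (m l)) * Real.exp (-y)

/-- Terminal value `V_L(m) = max_x exp(m[x]) / ∑_l exp(m[l])`. -/
def Vterm (hcard : 2 ≤ Fintype.card ι) (m : ι → ℝ) : ℝ :=
  ((Finset.univ : Finset ι).sup' (univ_nonempty_of_card hcard) fun x => Real.exp (m x))
    / ∑ l, Real.exp (m l)



section Helpers

variable {ν p E : ℝ}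
lemma integral_exp_neg_mul_Ioi {b : ℝ} (hb : 0 < b) (c : ℝ) :
    ∫ y in Set.Ioi c, Real.exp (-(b * y)) = Real.exp (-(b * c)) / b := by
  have h := MeasureTheory.integral_comp_mul_left_Ioi (fun x => Real.exp (-x)) c hb
  simp only [integral_exp_neg_Ioi, smul_eq_mul] at h
  rw [h]
  ring

lemma hfun_eq {ν : ℝ} (hν0 : 0 < ν) (hν1 : ν < 1) :
    hfun ν = ν ^ ((1-ν)⁻¹ - 1) - ν ^ ((1-ν)⁻¹) := by
  have h1 : (0:ℝ) < 1 - ν := by linarith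
  rw [Real.rpow_def_of_pos hν0, Real.rpow_def_of_pos hν0, hfun]
  congr 2
  · field_simp
    ring

lemma hfun_pos {ν : ℝ} (hν0 : 0 < ν) (hν1 : ν < 1) : 0 < hfun ν := by
  rw [hfun, sub_pos, Real.exp_lt_exp]
  have h1 : (0:ℝ) < 1 - ν := by linarith
  have : Real.log ν < 0 := Real.log_neg hν0 hν1
  rw [div_lt_div_iff₀ h1 h1]
  nlinarith [mul_pos (mul_pos h1 h1) (neg_pos.mpr this)]





lemma beta_gt_one (hν0 : 0 < ν) (hν1 : ν < 1) : 1 < (1-ν)⁻¹ := by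
  rw [lt_inv_comm₀ one_pos (by linarith)]
  simp; linarith

lemma phi_concave (hν0 : 0 < ν) (hν1 : ν < 1) :
    ConcaveOn ℝ (Set.Icc ν 1)
      (fun r => 1 + hfun ν * r ^ ((1-ν)⁻¹) - r - hfun ν * r ^ (1 - (1-ν)⁻¹)) := by
  set β := (1-ν)⁻¹ with hβ
  set c := hfun ν with hc
  have hcpos : 0 < c := hfun_pos hν0 hν1
  have hβ1 : 1 < β := beta_gt_one hν0 hν1
  have hint : interior (Set.Icc ν 1) = Set.Ioo ν 1 := interior_Icc
  have key : ∀ x ∈ Set.Ioo ν 1, x ≠ 0 := fun x hx => ne_of_gt (lt_trans hν0 hx.1)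
  apply concaveOn_of_hasDerivWithinAt2_nonpos (convex_Icc _ _)
    (f' := fun r => c * (β * r^(β-1)) - 1 - c * ((1-β) * r^(-β)))
    (f'' := fun r => c * (β * ((β-1) * r^(β-2))) - c * ((1-β) * ((-β) * r^(-β-1))))
  · have h1 : ContinuousOn (fun r:ℝ => r ^ β) (Set.Icc ν 1) := fun x hx =>
      (Real.continuousAt_rpow_const x β (Or.inl (ne_of_gt (lt_of_lt_of_le hν0 hx.1)))).continuousWithinAt
    have h2 : ContinuousOn (fun r:ℝ => r ^ (1-β)) (Set.Icc ν 1) := fun x hx =>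
      (Real.continuousAt_rpow_const x (1-β) (Or.inl (ne_of_gt (lt_of_lt_of_le hν0 hx.1)))).continuousWithinAt
    exact ((continuousOn_const.add (continuousOn_const.mul h1)).sub continuousOn_id).sub
      (continuousOn_const.mul h2)
  · intro x hx
    rw [hint] at hx
    have hx0 := key x hx
    have d1 : HasDerivAt (fun r:ℝ => 1 + c * r ^ β - r - c * r ^ (1-β))
        (c * (β * x^(β-1)) - 1 - c * ((1-β) * x^(-β))) x := by
      have e : (1:ℝ) - β - 1 = -β := by ring
      have := (((hasDerivAt_const x (1:ℝ)).add
        ((Real.hasDerivAt_rpow_const (p := β) (Or.inl hx0)).const_mul c)).sub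
        (hasDerivAt_id x)).sub
        ((Real.hasDerivAt_rpow_const (p := 1-β) (Or.inl hx0)).const_mul c)
      simpa [e, Pi.add_def, Pi.sub_def] using this
    rw [hint]
    exact d1.hasDerivWithinAt
  · intro x hx
    rw [hint] at hx
    have hx0 := key x hx
    have d2 : HasDerivAt (fun r:ℝ => c * (β * r^(β-1)) - 1 - c * ((1-β) * r^(-β)))
        (c * (β * ((β-1) * x^(β-2))) - c * ((1-β) * ((-β) * x^(-β-1)))) x := by
      have e : β - 1 - 1 = β - 2 := by ring
      have := (((Real.hasDerivAt_rpow_const (p := β-1) (Or.inl hx0)).const_mul β).const_mul c |>.sub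
        (hasDerivAt_const x (1:ℝ))).sub
        (((Real.hasDerivAt_rpow_const (p := -β) (Or.inl hx0)).const_mul (1-β)).const_mul c)
      simpa [e, Pi.add_def, Pi.sub_def] using this
    rw [hint]
    exact d2.hasDerivWithinAt
  · intro x hx
    rw [hint] at hx
    have hx0 : 0 < x := lt_trans hν0 hx.1
    have hrp : x ^ (β-2) ≤ x ^ (-β-1) :=
      Real.rpow_le_rpow_of_exponent_ge hx0 hx.2.le (by linarith)
    have h1 : 0 ≤ c * (β * (β-1)) := mul_nonneg hcpos.le (mul_nonneg (by linarith) (by linarith))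
    nlinarith [mul_le_mul_of_nonneg_left hrp h1]

lemma phi_nonneg (hν0 : 0 < ν) (hν1 : ν < 1) {r : ℝ} (hr1 : ν ≤ r) (hr2 : r ≤ 1) :
    r + hfun ν * r ^ (1 - (1-ν)⁻¹) ≤ 1 + hfun ν * r ^ ((1-ν)⁻¹) := by
  set β := (1-ν)⁻¹ with hβ
  set c := hfun ν with hc
  have hcpos : 0 < c := hfun_pos hν0 hν1
  have h1ν : (0:ℝ) < 1 - ν := by linarith
  have e1 : ν ^ (β-1) * ν ^ (1-β) = 1 := by
    rw [← Real.rpow_add hν0]; norm_num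
  have e2 : ν ^ β * ν ^ (1-β) = ν := by
    rw [← Real.rpow_add hν0]; simp
  have ecν : c * ν ^ (1-β) = 1 - ν := by
    rw [hc, hfun_eq hν0 hν1, ← hβ, sub_mul, e1, e2]
  have hfν : 0 ≤ 1 + c * ν ^ β - ν - c * ν ^ (1-β) := by
    rw [ecν]
    have : 0 ≤ c * ν ^ β := mul_nonneg hcpos.le (Real.rpow_nonneg hν0.le β)
    linarith
  have hf1 : 1 + c * (1:ℝ) ^ β - 1 - c * (1:ℝ) ^ (1-β) = 0 := by
    rw [Real.one_rpow, Real.one_rpow]; ring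
  have hcon := phi_concave hν0 hν1
  set a := (1 - r) / (1 - ν) with ha'
  set b := (r - ν) / (1 - ν) with hb'
  have ha : 0 ≤ a := div_nonneg (by linarith) h1ν.le
  have hb : 0 ≤ b := div_nonneg (by linarith) h1ν.le
  have hab : a + b = 1 := by
    rw [ha', hb', ← add_div, div_eq_one_iff_eq (ne_of_gt h1ν)]; ring
  have hcomb := hcon.2 (Set.left_mem_Icc.mpr (by linarith)) (Set.right_mem_Icc.mpr (by linarith))
    ha hb hab
  have hr : a • ν + b • (1:ℝ) = r := by
    rw [smul_eq_mul, smul_eq_mul, ha', hb']; field_simp; ring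
  rw [hr, smul_eq_mul, smul_eq_mul] at hcomb
  have : 0 ≤ 1 + c * r ^ β - r - c * r ^ (1-β) := by
    calc (0:ℝ) ≤ a * (1 + c * ν ^ β - ν - c * ν ^ (1-β)) + b * 0 := by
          nlinarith
      _ = a * (1 + c * ν ^ β - ν - c * ν ^ (1-β))
          + b * (1 + c * (1:ℝ) ^ β - 1 - c * (1:ℝ) ^ (1-β)) := by rw [hf1]
      _ ≤ _ := hcomb
  linarith




lemma key_ineq (hν0 : 0 < ν) (hν1 : ν < 1) {u v : ℝ} (huv : v ≤ u)
    (hlb : Real.log ν ≤ v - u) :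
    Real.exp v + hfun ν * Real.exp ((u - ν*v)/(1-ν))
      ≤ Real.exp u + hfun ν * Real.exp ((v - ν*u)/(1-ν)) := by
  set β := (1-ν)⁻¹ with hβ
  have h1ν : (0:ℝ) < 1 - ν := by linarith
  set r := Real.exp (v - u) with hr'
  have hr0 : 0 < r := Real.exp_pos _
  have hlog : Real.log r = v - u := Real.log_exp _
  have hr1 : ν ≤ r := by
    rw [hr', ← Real.exp_log hν0]
    exact Real.exp_le_exp.mpr hlb
  have hr2 : r ≤ 1 := by
    rw [hr', ← Real.exp_zero]
    exact Real.exp_le_exp.mpr (by linarith)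
  have key := phi_nonneg hν0 hν1 hr1 hr2
  have hrβ : r ^ β = Real.exp ((v-u) * β) := by
    rw [Real.rpow_def_of_pos hr0, hlog]
  have hrβ' : r ^ (1-β) = Real.exp ((v-u) * (1-β)) := by
    rw [Real.rpow_def_of_pos hr0, hlog]
  have e1 : Real.exp u * r = Real.exp v := by
    rw [hr', ← Real.exp_add]; ring_nf
  have e2 : Real.exp u * r ^ (1-β) = Real.exp ((u - ν*v)/(1-ν)) := by
    rw [hrβ', ← Real.exp_add]
    congr 1
    rw [hβ]
    field_simp
    ring
  have e3 : Real.exp u * r ^ β = Real.exp ((v - ν*u)/(1-ν)) := by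
    rw [hrβ, ← Real.exp_add]
    congr 1
    rw [hβ]
    field_simp
    ring
  have := mul_le_mul_of_nonneg_left key (Real.exp_pos u).le
  calc Real.exp v + hfun ν * Real.exp ((u - ν*v)/(1-ν))
      = Real.exp u * (r + hfun ν * r ^ (1-β)) := by rw [mul_add, e1, ← mul_assoc,
        mul_comm (Real.exp u) (hfun ν), mul_assoc, e2]
    _ ≤ Real.exp u * (1 + hfun ν * r ^ β) := this
    _ = Real.exp u + hfun ν * Real.exp ((v - ν*u)/(1-ν)) := by rw [mul_add, mul_one, ← mul_assoc,
        mul_comm (Real.exp u) (hfun ν), mul_assoc, e3]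



lemma cont_integrand (ν p E : ℝ) :
    Continuous (fun y => max (ν*p*Real.exp ((1-ν)*y)) E * Real.exp (-y)) := by
  exact ((continuous_const.mul ((Real.continuous_exp).comp (continuous_const.mul continuous_id))).max
    continuous_const).mul ((Real.continuous_exp).comp continuous_neg)

lemma integrableOn_integrand (hν0 : 0 < ν) (hp : 0 ≤ p) (hE : 0 ≤ E) :
    IntegrableOn (fun y => max (ν*p*Real.exp ((1-ν)*y)) E * Real.exp (-y)) (Set.Ioi 0) := by
  have hg : IntegrableOn (fun y => ν*p*Real.exp (-ν*y) + E * Real.exp (-1*y)) (Set.Ioi 0) :=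
    ((exp_neg_integrableOn_Ioi 0 hν0).const_mul _).add
      ((exp_neg_integrableOn_Ioi 0 one_pos).const_mul _)
  apply MeasureTheory.Integrable.mono hg ((cont_integrand ν p E).aestronglyMeasurable.restrict)
  apply Filter.Eventually.of_forall
  intro y
  have h1 : 0 < Real.exp ((1-ν)*y) := Real.exp_pos _
  have h2 : 0 < Real.exp (-y) := Real.exp_pos _
  have hmax0 : 0 ≤ max (ν*p*Real.exp ((1-ν)*y)) E := le_max_of_le_right hE
  have hnn : 0 ≤ ν * p * Real.exp ((1-ν)*y) := mul_nonneg (mul_nonneg hν0.le hp) h1.le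
  have hmax : max (ν*p*Real.exp ((1-ν)*y)) E ≤ ν*p*Real.exp ((1-ν)*y) + E :=
    max_le (by nlinarith) (by nlinarith)
  rw [Real.norm_eq_abs, Real.norm_eq_abs, abs_of_nonneg (mul_nonneg hmax0 h2.le),
    abs_of_nonneg (by positivity)]
  have e1 : ν*p*Real.exp (-ν*y) = ν*p*Real.exp ((1-ν)*y) * Real.exp (-y) := by
    rw [mul_assoc, mul_assoc, ← Real.exp_add]; ring_nf
  have e2 : E * Real.exp (-1*y) = E * Real.exp (-y) := by norm_num
  rw [e1, e2]
  nlinarith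

lemma integral_case_a (hν0 : 0 < ν) (hν1 : ν < 1) (hp : 0 < p) (hE : E ≤ ν * p) :
    ∫ y in Set.Ioi (0:ℝ), max (ν*p*Real.exp ((1-ν)*y)) E * Real.exp (-y) = p := by
  rw [setIntegral_congr_fun measurableSet_Ioi
    (g := fun y => ν * p * Real.exp (-(ν*y)))]
  · rw [MeasureTheory.integral_const_mul, integral_exp_neg_mul_Ioi hν0]
    rw [mul_zero, neg_zero, Real.exp_zero]
    field_simp
  · intro y hy
    simp only
    have h1 : (1:ℝ) ≤ Real.exp ((1-ν)*y) :=
      Real.one_le_exp (by nlinarith [Set.mem_Ioi.mp hy])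
    have hmax : max (ν*p*Real.exp ((1-ν)*y)) E = ν*p*Real.exp ((1-ν)*y) :=
      max_eq_left (le_trans hE (le_mul_of_one_le_right (mul_nonneg hν0.le hp.le) h1))
    rw [hmax, mul_assoc, ← Real.exp_add]
    ring_nf

lemma integral_case_b (hν0 : 0 < ν) (hν1 : ν < 1) (hp : 0 < p) (hE : 0 < E) (h : ν * p ≤ E) :
    ∫ y in Set.Ioi (0:ℝ), max (ν*p*Real.exp ((1-ν)*y)) E * Real.exp (-y)
      = E + hfun ν * Real.exp ((Real.log p - ν * Real.log E)/(1-ν)) := by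
  have h1ν : (0:ℝ) < 1 - ν := by linarith
  set t := (Real.log E - Real.log (ν*p))/(1-ν) with ht'
  have ht0 : 0 ≤ t := div_nonneg (sub_nonneg.mpr (Real.log_le_log (by positivity) h)) h1ν.le
  have hcross : ν*p*Real.exp ((1-ν)*t) = E := by
    have : (1-ν)*t = Real.log E - Real.log (ν*p) := by
      rw [ht']; field_simp
    rw [this, Real.exp_sub, Real.exp_log hE, Real.exp_log (by positivity)]
    field_simp
  have hsplit : Set.Ioc 0 t ∪ Set.Ioi t = Set.Ioi (0:ℝ) := Set.Ioc_union_Ioi_eq_Ioi ht0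
  have hint := integrableOn_integrand (E := E) (p := p) hν0 hp.le hE.le
  rw [← hsplit, setIntegral_union (Set.Ioc_disjoint_Ioi le_rfl) measurableSet_Ioi
    (hint.mono_set (by rw [← hsplit]; exact Set.subset_union_left))
    (hint.mono_set (by rw [← hsplit]; exact Set.subset_union_right))]
  have hp1 : ∫ y in Set.Ioc (0:ℝ) t, max (ν*p*Real.exp ((1-ν)*y)) E * Real.exp (-y)
      = E * (1 - Real.exp (-t)) := by
    rw [setIntegral_congr_fun measurableSet_Ioc (g := fun y => E * Real.exp (-y))]
    · rw [← intervalIntegral.integral_of_le ht0, intervalIntegral.integral_const_mul]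
      have : ∫ y in (0:ℝ)..t, Real.exp (-y) = 1 - Real.exp (-t) := by
        rw [intervalIntegral.integral_comp_neg fun x => Real.exp x, integral_exp]
        simp
      rw [this]
    · intro y hy
      simp only
      have hmax : max (ν*p*Real.exp ((1-ν)*y)) E = E := by
        apply max_eq_right
        rw [← hcross]
        have : Real.exp ((1-ν)*y) ≤ Real.exp ((1-ν)*t) :=
          Real.exp_le_exp.mpr (by nlinarith [hy.2])
        nlinarith [mul_le_mul_of_nonneg_left this (mul_nonneg hν0.le hp.le)]
      rw [hmax]
  have hp2 : ∫ y in Set.Ioi t, max (ν*p*Real.exp ((1-ν)*y)) E * Real.exp (-y)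
      = p * Real.exp (-(ν*t)) := by
    rw [setIntegral_congr_fun measurableSet_Ioi (g := fun y => ν * p * Real.exp (-(ν*y)))]
    · rw [MeasureTheory.integral_const_mul, integral_exp_neg_mul_Ioi hν0]
      field_simp
    · intro y hy
      simp only
      have hmax : max (ν*p*Real.exp ((1-ν)*y)) E = ν*p*Real.exp ((1-ν)*y) := by
        apply max_eq_left
        rw [← hcross]
        have : Real.exp ((1-ν)*t) ≤ Real.exp ((1-ν)*y) :=
          Real.exp_le_exp.mpr (by nlinarith [Set.mem_Ioi.mp hy])
        nlinarith [mul_le_mul_of_nonneg_left this (mul_nonneg hν0.le hp.le)]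
      rw [hmax, mul_assoc, ← Real.exp_add]
      ring_nf
  rw [hp1, hp2]
  set A := (Real.log p - ν * Real.log E)/(1-ν) with hA
  have hlognp : Real.log (ν*p) = Real.log ν + Real.log p :=
    Real.log_mul (ne_of_gt hν0) (ne_of_gt hp)
  have eE : E * Real.exp (-t) = Real.exp A * Real.exp (Real.log ν/(1-ν)) := by
    rw [← Real.exp_log hE, ← Real.exp_add, ← Real.exp_add]
    congr 1
    rw [ht', hA, hlognp]
    field_simp
    ring
  have eP : p * Real.exp (-(ν*t)) = Real.exp A * Real.exp (ν * Real.log ν/(1-ν)) := by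
    rw [← Real.exp_log hp, ← Real.exp_add, ← Real.exp_add]
    congr 1
    rw [ht', hA, hlognp]
    field_simp
    ring
  rw [mul_one_sub, eE, eP, hfun]
  ring

end Helpers

section FinsetHelpers

lemma sup'_exp_eq (hcard : 2 ≤ Fintype.card ι) (m' m : ι → ℝ) (a : ι)
    (hoff : ∀ x, x ≠ a → m' x = m x) :
    ((Finset.univ : Finset ι).sup' (univ_nonempty_of_card hcard) fun x => Real.exp (m' x))
      = max (Real.exp (m' a)) (Real.exp (maxOther hcard m a)) := by
  have hexp : Real.exp (maxOther hcard m a)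
      = ((Finset.univ : Finset ι).erase a).sup' (erase_nonempty_of_card hcard a)
          fun x => Real.exp (m x) := by
    rw [maxOther, Finset.comp_sup'_eq_sup'_comp _ Real.exp
      (fun x y => Monotone.map_max (fun _ _ h => Real.exp_le_exp.mpr h))]
    rfl
  apply le_antisymm
  · apply Finset.sup'_le
    intro x _
    by_cases hx : x = a
    · subst hx; exact le_max_left _ _
    · refine le_trans ?_ (le_max_right _ _)
      rw [hexp, hoff x hx]
      exact Finset.le_sup' (fun z => Real.exp (m z))
        (Finset.mem_erase.mpr ⟨hx, Finset.mem_univ _⟩)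
  · apply max_le
    · exact Finset.le_sup' (fun z => Real.exp (m' z)) (Finset.mem_univ a)
    · rw [hexp]
      apply Finset.sup'_le
      intro x hx
      rw [← hoff x (Finset.mem_erase.mp hx).1]
      exact Finset.le_sup' (fun z => Real.exp (m' z)) (Finset.mem_univ x)

lemma integrand_rewrite {ν : ℝ} (hν0 : 0 < ν) (hν1 : ν < 1)
    (hcard : 2 ≤ Fintype.card ι) (m : ι → ℝ) (a : ι) (y : ℝ) :
    Vterm hcard (fun x => m x + Jfun ν y * kdelta a x) * fdens ν m a y
      = max (ν * Real.exp (m a) * Real.exp ((1-ν)*y)) (Real.exp (maxOther hcard m a))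
          * Real.exp (-y) / ∑ l, Real.exp (m l) := by
  set m' := fun x => m x + Jfun ν y * kdelta a x with hm'
  have hoff : ∀ x, x ≠ a → m' x = m x := by
    intro x hx; simp [hm', kdelta, hx]
  have hma : m' a = m a + Jfun ν y := by simp [hm', kdelta]
  have hexpa : Real.exp (m' a) = ν * Real.exp (m a) * Real.exp ((1-ν)*y) := by
    rw [hma, Jfun, Real.exp_add, Real.exp_add, Real.exp_log hν0]; ring
  have hS : (0:ℝ) < ∑ l, Real.exp (m l) :=
    Finset.sum_pos (fun l _ => Real.exp_pos _) (univ_nonempty_of_card hcard)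
  have hS' : (0:ℝ) < ∑ l, Real.exp (m' l) :=
    Finset.sum_pos (fun l _ => Real.exp_pos _) (univ_nonempty_of_card hcard)
  have hsum : ∑ l, Real.exp (m' l)
      = Real.exp (m' a) + ((∑ l, Real.exp (m l)) - Real.exp (m a)) := by
    rw [← Finset.add_sum_erase _ (fun l => Real.exp (m' l)) (Finset.mem_univ a)]
    congr 1
    rw [← Finset.sum_erase_eq_sub (Finset.mem_univ a)]
    apply Finset.sum_congr rfl
    intro x hx
    rw [hoff x (Finset.mem_erase.mp hx).1]
  have hfd : fdens ν m a y = Real.exp (-y) * (∑ l, Real.exp (m' l)) / ∑ l, Real.exp (m l) := by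
    rw [fdens, hsum, hexpa]
    have he : Real.exp (-ν*y) = Real.exp ((1-ν)*y) * Real.exp (-y) := by
      rw [← Real.exp_add]; ring_nf
    rw [he]
    field_simp
  rw [Vterm, sup'_exp_eq hcard m' m a hoff, hexpa, hfd]
  field_simp

end FinsetHelpers

/-- the one-step Q-value is maximized at the second-best index `x₂`, and the
maximum equals `(exp(m[x₁]) + h(ν) exp((m[x₂] - ν m[x₁])/(1-ν))) / ∑_l exp(m[l])`. -/
theorem oneStep_Q_max_at_secondBest
    (ν : ℝ) (hν : ν ∈ Set.Ioo (0:ℝ) 1)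
    (hcard : 2 ≤ Fintype.card ι) (m : ι → ℝ)
    (x₁ x₂ : ι) (hx₁ : ∀ x, m x ≤ m x₁) (hne : x₂ ≠ x₁)
    (hx₂ : ∀ x, x ≠ x₁ → m x ≤ m x₂) :
    (∀ a : ι,
        (∫ y in Set.Ioi (0:ℝ),
            Vterm hcard (fun x => m x + Jfun ν y * kdelta a x) * fdens ν m a y)
          ≤ ∫ y in Set.Ioi (0:ℝ),
              Vterm hcard (fun x => m x + Jfun ν y * kdelta x₂ x) * fdens ν m x₂ y)
    ∧ (∫ y in Set.Ioi (0:ℝ),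
          Vterm hcard (fun x => m x + Jfun ν y * kdelta x₂ x) * fdens ν m x₂ y)
        = (Real.exp (m x₁) + hfun ν * Real.exp ((m x₂ - ν * m x₁) / (1 - ν)))
            / ∑ l, Real.exp (m l) := by
  obtain ⟨hν0, hν1⟩ := hν
  have hS : (0:ℝ) < ∑ l, Real.exp (m l) :=
    Finset.sum_pos (fun l _ => Real.exp_pos _) (univ_nonempty_of_card hcard)
  have hQ : ∀ a : ι,
      (∫ y in Set.Ioi (0:ℝ),
          Vterm hcard (fun x => m x + Jfun ν y * kdelta a x) * fdens ν m a y)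
        = (∫ y in Set.Ioi (0:ℝ),
            max (ν * Real.exp (m a) * Real.exp ((1-ν)*y))
              (Real.exp (maxOther hcard m a)) * Real.exp (-y)) / ∑ l, Real.exp (m l) := by
    intro a
    rw [← integral_div]
    exact setIntegral_congr_fun measurableSet_Ioi
      (fun y _ => integrand_rewrite hν0 hν1 hcard m a y)
  have hmaxo : ∀ a : ι, a ≠ x₁ → maxOther hcard m a = m x₁ := by
    intro a ha
    apply le_antisymm
    · exact Finset.sup'_le _ _ fun x _ => hx₁ x
    · exact Finset.le_sup' m (Finset.mem_erase.mpr ⟨ha.symm, Finset.mem_univ _⟩)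
  have hmaxo1 : maxOther hcard m x₁ = m x₂ := by
    apply le_antisymm
    · exact Finset.sup'_le _ _ fun x hx => hx₂ x (Finset.mem_erase.mp hx).1
    · exact Finset.le_sup' m (Finset.mem_erase.mpr ⟨hne, Finset.mem_univ _⟩)
  have hQ2 : (∫ y in Set.Ioi (0:ℝ),
        Vterm hcard (fun x => m x + Jfun ν y * kdelta x₂ x) * fdens ν m x₂ y)
      = (Real.exp (m x₁) + hfun ν * Real.exp ((m x₂ - ν * m x₁) / (1 - ν)))
          / ∑ l, Real.exp (m l) := by
    rw [hQ x₂, hmaxo x₂ hne]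
    rw [integral_case_b hν0 hν1 (Real.exp_pos (m x₂)) (Real.exp_pos (m x₁))
      (by nlinarith [Real.exp_le_exp.mpr (hx₁ x₂), Real.exp_pos (m x₂)]),
      Real.log_exp, Real.log_exp]
  refine ⟨?_, hQ2⟩
  intro a
  rw [hQ2]
  by_cases hax : a = x₁
  · subst hax
    rw [hQ a, hmaxo1]
    rcases le_total (Real.exp (m x₂)) (ν * Real.exp (m a)) with hcase | hcase
    · rw [integral_case_a hν0 hν1 (Real.exp_pos (m a)) hcase]
      gcongr
      exact le_add_of_nonneg_right (mul_nonneg (hfun_pos hν0 hν1).le (Real.exp_pos _).le)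
    · rw [integral_case_b hν0 hν1 (Real.exp_pos (m a)) (Real.exp_pos (m x₂)) hcase,
        Real.log_exp, Real.log_exp]
      have hlb : Real.log ν ≤ m x₂ - m a := by
        have := Real.log_le_log (by positivity) hcase
        rw [Real.log_mul (ne_of_gt hν0) (ne_of_gt (Real.exp_pos _)), Real.log_exp,
          Real.log_exp] at this
        linarith
      exact (div_le_div_iff_of_pos_right hS).mpr (key_ineq hν0 hν1 (hx₁ x₂) hlb)
  · rw [hQ a, hmaxo a hax]
    have hple : ∀ y : ℝ,
        max (ν * Real.exp (m a) * Real.exp ((1-ν)*y)) (Real.exp (m x₁)) * Real.exp (-y)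
          ≤ max (ν * Real.exp (m x₂) * Real.exp ((1-ν)*y)) (Real.exp (m x₁))
              * Real.exp (-y) := by
      intro y
      have h1 : Real.exp (m a) ≤ Real.exp (m x₂) := Real.exp_le_exp.mpr (hx₂ a hax)
      have h2 : (0:ℝ) ≤ Real.exp ((1-ν)*y) := (Real.exp_pos _).le
      apply mul_le_mul_of_nonneg_right ?_ (Real.exp_pos _).le
      exact max_le_max (mul_le_mul_of_nonneg_right
        (mul_le_mul_of_nonneg_left h1 hν0.le) h2) le_rfl
    rw [← hQ2, hQ x₂, hmaxo x₂ hne]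
    gcongr ?_ / _
    exact setIntegral_mono_on
      (integrableOn_integrand hν0 (Real.exp_pos _).le (Real.exp_pos _).le)
      (integrableOn_integrand hν0 (Real.exp_pos _).le (Real.exp_pos _).le)
      measurableSet_Ioi (fun y _ => hple y)


end
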